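/- For any ideal I of R = ℂ[x_1,…,x_d], the radical √(I^{(*)}) is a power-closed ideal, and (√I)^{(*)} ⊆ √(I^{(*)}). Moreover, if I itself is power-closed then √I is power-closed and (√I)^{(*)} = √(I^{(*)}) = √I. -/
import Mathlib


open MvPolynomial

/-- The substitution `x_j ↦ x_j^i`. -/
noncomputable def pw (d i : ℕ) (f : MvPolynomial (Fin d) ℂ) : MvPolynomial (Fin d) ℂ :=
  aeval (fun j => X j ^ i) f

/-- An ideal is power-closed if it is closed under all the substitutions `x_j ↦ x_j^i`. -/
def PowerClosed {d : ℕ} (J : Ideal (MvPolynomial (Fin d) ℂ)) : Prop :=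
  ∀ f ∈ J, ∀ i : ℕ, 0 < i → pw d i f ∈ J

/-- The power-closure of an ideal: the smallest power-closed ideal containing it. -/
noncomputable def powerClosure {d : ℕ} (I : Ideal (MvPolynomial (Fin d) ℂ)) :
    Ideal (MvPolynomial (Fin d) ℂ) :=
  sInf {J | PowerClosed J ∧ I ≤ J}

lemma pc_radical {d : ℕ} {J : Ideal (MvPolynomial (Fin d) ℂ)} (h : PowerClosed J) :
    PowerClosed J.radical := by
  intro f hf i hi
  obtain ⟨n, hn⟩ := hf
  exact ⟨n, by rw [pw, ← map_pow]; exact h _ hn i hi⟩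

lemma pc_powerClosure {d : ℕ} (I : Ideal (MvPolynomial (Fin d) ℂ)) :
    PowerClosed (powerClosure I) := by
  intro f hf i hi
  rw [powerClosure, Ideal.mem_sInf] at *
  intro J hJ
  exact hJ.1 _ (hf hJ) i hi

lemma le_powerClosure {d : ℕ} (I : Ideal (MvPolynomial (Fin d) ℂ)) :
    I ≤ powerClosure I :=
  le_sInf fun _ hJ => hJ.2

lemma powerClosure_le {d : ℕ} {I J : Ideal (MvPolynomial (Fin d) ℂ)}
    (hJ : PowerClosed J) (hIJ : I ≤ J) : powerClosure I ≤ J :=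
  sInf_le ⟨hJ, hIJ⟩

theorem stmt19 (d : ℕ) (I : Ideal (MvPolynomial (Fin d) ℂ)) :
    PowerClosed (powerClosure I).radical ∧
    powerClosure I.radical ≤ (powerClosure I).radical ∧
    (PowerClosed I →
      PowerClosed I.radical ∧
      powerClosure I.radical = (powerClosure I).radical ∧
      (powerClosure I).radical = I.radical) := by
  have h1 : PowerClosed (powerClosure I).radical := pc_radical (pc_powerClosure I)
  have h2 : powerClosure I.radical ≤ (powerClosure I).radical :=
    powerClosure_le h1 (Ideal.radical_mono (le_powerClosure I))
  refine ⟨h1, h2, fun hI => ?_⟩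
  have hpc : powerClosure I = I :=
    le_antisymm (powerClosure_le hI le_rfl) (le_powerClosure I)
  have hrad : PowerClosed I.radical := pc_radical hI
  refine ⟨hrad, le_antisymm h2 ?_, by rw [hpc]⟩
  rw [hpc]
  exact le_powerClosure _
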